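/- Let p, q, r be natural numbers greater than 1 such that (q ∣ r or r ∣ q), (p ∣ r or r ∣ p), and (q ∣ p or p ∣ q). Then for every prime N with N > 32·p²·q²·r², there exist positive integers x, y, z with x^p + y^q ≡ z^r (mod N) and N does not divide x·y·z. -/

import Mathlib

set_option maxHeartbeats 1000000

open Finset MulChar

section Aux

variable {N : ℕ} [Fact N.Prime]

private lemma sumA (χ ψ : MulChar (ZMod N) ℂ) :
    ∑ u : ZMod N, χ u * ψ (1 + u) = χ (-1) * jacobiSum χ ψ := by
  have h1 : ∑ u : ZMod N, χ u * ψ (1 + u) = ∑ x : ZMod N, χ (-x) * ψ (1 - x) := by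
    refine Fintype.sum_equiv (Equiv.neg (ZMod N)) _ _ fun u => ?_
    simp [sub_neg_eq_add]
  rw [h1, jacobiSum, mul_sum]
  refine Finset.sum_congr rfl fun x _ => ?_
  rw [show (-x : ZMod N) = -1 * x from (neg_one_mul x).symm, map_mul, mul_assoc]

private lemma norm_neg_one (χ : MulChar (ZMod N) ℂ) : ‖χ (-1)‖ = 1 := by
  have h : χ (-1) * χ (-1) = 1 := by
    rw [← map_mul, neg_mul_neg, one_mul, map_one]
  have h2 : ‖χ (-1)‖ * ‖χ (-1)‖ = 1 := by
    rw [← norm_mul, h, norm_one]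
  nlinarith [norm_nonneg (χ (-1))]

private lemma norm_jacobi {χ ψ : MulChar (ZMod N) ℂ} (hχ : χ ≠ 1) (hψ : ψ ≠ 1)
    (hχψ : χ * ψ ≠ 1) : ‖jacobiSum χ ψ‖ = Real.sqrt N := by
  have hchar : ringChar ℂ ≠ ringChar (ZMod N) := by
    rw [ringChar.eq_zero, ZMod.ringChar_zmod_n]
    exact fun h => (Fact.out : N.Prime).ne_zero h.symm
  have hJJ := jacobiSum_mul_jacobiSum_inv hchar hχ hψ hχψ
  have hstar : (starRingEnd ℂ) (jacobiSum χ ψ) = jacobiSum χ⁻¹ ψ⁻¹ := by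
    rw [← jacobiSum_ringHomComp]
    congr 1
    · exact (MulChar.star_eq_inv χ).symm ▸ rfl
    · exact (MulChar.star_eq_inv ψ).symm ▸ rfl
  rw [← hstar] at hJJ
  rw [Complex.mul_conj] at hJJ
  have hnormSq : Complex.normSq (jacobiSum χ ψ) = N := by
    rw [ZMod.card] at hJJ
    exact_mod_cast hJJ
  rw [Complex.norm_def, hnormSq]

private lemma extract {m : ℕ} (hm : m ≠ 0) (χ : MulChar (ZMod N) ℂ)
    (hord : orderOf χ = Nat.gcd m (N - 1)) (u : (ZMod N)ˣ) (hu : χ ↑u = 1) :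
    ∃ t : (ZMod N)ˣ, t ^ m = u := by
  obtain ⟨g, hg⟩ := IsCyclic.exists_generator (α := (ZMod N)ˣ)
  set d := Nat.gcd m (N - 1) with hd
  set c := χ.equivToUnitHom with hc
  have hcoe : ∀ v : (ZMod N)ˣ, (↑(c v) : ℂ) = χ ↑v := fun v => MulChar.coe_equivToUnitHom χ v
  have hcg : ∀ k : ℕ, (χ ^ k = 1) ↔ (c g) ^ k = 1 := by
    intro k
    rw [MulChar.eq_iff hg, MulChar.pow_apply_coe, MulChar.one_apply_coe, ← hcoe g]
    constructor
    · intro h; ext; push_cast; exact h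
    · intro h; rw [← Units.val_pow_eq_pow_val, h, Units.val_one]
  have hog : orderOf (c g) = d := by
    refine Nat.dvd_antisymm ?_ ?_
    · exact orderOf_dvd_of_pow_eq_one ((hcg d).mp (hord ▸ pow_orderOf_eq_one χ))
    · rw [← hord]
      exact orderOf_dvd_of_pow_eq_one ((hcg _).mpr (pow_orderOf_eq_one (c g)))
  obtain ⟨n, hn⟩ := Subgroup.mem_zpowers_iff.mp (hg u)
  have hcu : c u = 1 := by
    ext; rw [hcoe u, hu, Units.val_one]
  have hpow : (c g) ^ n = 1 := by
    rw [← map_zpow c g n, hn]; exact hcu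
  have hdvd : (d : ℤ) ∣ n := by
    rw [← hog]; exact orderOf_dvd_iff_zpow_eq_one.mpr hpow
  obtain ⟨k, hk⟩ := hdvd
  have hbez := Nat.gcd_eq_gcd_ab m (N - 1)
  refine ⟨g ^ (Nat.gcdA m (N - 1) * k), ?_⟩
  have hcard : g ^ ((N - 1 : ℕ) : ℤ) = 1 := by
    rw [zpow_natCast, ← ZMod.card_units N]; exact pow_card_eq_one
  have h2 : g ^ (((N - 1 : ℕ) : ℤ) * (Nat.gcdB m (N - 1) * k)) = 1 := by
    rw [zpow_mul, hcard, one_zpow]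
  rw [← zpow_natCast (g ^ (Nat.gcdA m (N - 1) * k)) m, ← zpow_mul, ← hn, hk]
  have : (d : ℤ) * k = (m : ℤ) * (Nat.gcdA m (N - 1) * k)
      + ((N - 1 : ℕ) : ℤ) * (Nat.gcdB m (N - 1) * k) := by
    rw [hd, hbez]; ring
  rw [this, zpow_add, h2, mul_one]
  congr 1
  ring

private lemma keyexists (p r : ℕ) (hp : p ≠ 0) (hr : r ≠ 0)
    (hbig : 32 * p ^ 2 * r ^ 2 < N) :
    ∃ t w : (ZMod N)ˣ, (↑t : ZMod N) ^ p + 1 = (↑w : ZMod N) ^ r := by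
  have hNp : N.Prime := Fact.out
  have hp1 : 1 ≤ p := Nat.one_le_iff_ne_zero.mpr hp
  have hr1 : 1 ≤ r := Nat.one_le_iff_ne_zero.mpr hr
  have hN33 : 33 ≤ N := by
    have h1 : 1 ≤ p ^ 2 := Nat.one_le_pow _ _ (by omega)
    have h2 : 1 ≤ r ^ 2 := Nat.one_le_pow _ _ (by omega)
    have : 32 * 1 * 1 ≤ 32 * p ^ 2 * r ^ 2 := Nat.mul_le_mul (Nat.mul_le_mul le_rfl h1) h2
    omega
  set d := Nat.gcd p (N - 1) with hdd
  set e := Nat.gcd r (N - 1) with hee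
  have hd0 : d ≠ 0 := Nat.gcd_ne_zero_left hp
  have he0 : e ≠ 0 := Nat.gcd_ne_zero_left hr
  have hdp : d ≤ p := Nat.le_of_dvd (by omega) (Nat.gcd_dvd_left _ _)
  have her : e ≤ r := Nat.le_of_dvd (by omega) (Nat.gcd_dvd_left _ _)
  obtain ⟨χ₀, hχord⟩ := MulChar.exists_mulChar_orderOf (ZMod N) (R := ℂ)
    (n := d) (by rw [ZMod.card]; exact Nat.gcd_dvd_right _ _)
    (Complex.isPrimitiveRoot_exp d hd0)
  obtain ⟨ψ₀, hψord⟩ := MulChar.exists_mulChar_orderOf (ZMod N) (R := ℂ)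
    (n := e) (by rw [ZMod.card]; exact Nat.gcd_dvd_right _ _)
    (Complex.isPrimitiveRoot_exp e he0)
  set T : ℕ → ℕ → ℂ := fun j k => ∑ u : ZMod N, (χ₀ ^ j) u * (ψ₀ ^ k) (1 + u) with hT
  have hTval : ∀ j k, T j k = (χ₀ ^ j) (-1) * jacobiSum (χ₀ ^ j) (ψ₀ ^ k) :=
    fun j k => sumA _ _
  -- the trivial term
  have hT00 : T 0 0 = (N : ℂ) - 2 := by
    rw [hTval 0 0, pow_zero, pow_zero, jacobiSum_one_one,
      MulChar.one_apply (isUnit_one.neg), one_mul, ZMod.card]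
  -- nontrivial powers
  have hχne : ∀ j, j ≠ 0 → j < d → χ₀ ^ j ≠ 1 := fun j h1 h2 =>
    pow_ne_one_of_lt_orderOf h1 (hχord ▸ h2)
  have hψne : ∀ k, k ≠ 0 → k < e → ψ₀ ^ k ≠ 1 := fun k h1 h2 =>
    pow_ne_one_of_lt_orderOf h1 (hψord ▸ h2)
  -- norm bound
  have hbound : ∀ j k, j < d → k < e → (j, k) ≠ (0, 0) → ‖T j k‖ ≤ Real.sqrt N := by
    intro j k hj hk hjk
    have hsqrt1 : (1 : ℝ) ≤ Real.sqrt N := by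
      rw [show (1:ℝ) = Real.sqrt 1 by simp]
      exact Real.sqrt_le_sqrt (by exact_mod_cast Nat.one_le_iff_ne_zero.mpr hNp.ne_zero)
    have hTjk : ‖T j k‖ = ‖jacobiSum (χ₀ ^ j) (ψ₀ ^ k)‖ := by
      rw [hTval j k, norm_mul, norm_neg_one, one_mul]
    rw [hTjk]
    rcases Nat.eq_zero_or_pos j with hj0 | hj0
    · subst hj0
      have hk0 : k ≠ 0 := by simpa using hjk
      rw [pow_zero, jacobiSum_one_nontrivial (hψne k hk0 hk), norm_neg, norm_one]
      exact hsqrt1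
    · rcases Nat.eq_zero_or_pos k with hk0 | hk0
      · subst hk0
        rw [pow_zero, jacobiSum_comm, jacobiSum_one_nontrivial (hχne j hj0.ne' hj),
          norm_neg, norm_one]
        exact hsqrt1
      · have hχ1 := hχne j hj0.ne' hj
        have hψ1 := hψne k hk0.ne' hk
        by_cases hprod : χ₀ ^ j * ψ₀ ^ k = 1
        · have hinv : ψ₀ ^ k = (χ₀ ^ j)⁻¹ := by
            rw [eq_inv_iff_mul_eq_one, mul_comm]; exact hprod
          rw [hinv, jacobiSum_nontrivial_inv hχ1, norm_neg, norm_neg_one]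
          exact hsqrt1
        · rw [norm_jacobi hχ1 hψ1 hprod]
  -- the full sum
  set S : ℂ := ∑ u : ZMod N,
      (∑ j ∈ range d, (χ₀ ^ j) u) * (∑ k ∈ range e, (ψ₀ ^ k) (1 + u)) with hS
  have hSsum : S = ∑ jk ∈ range d ×ˢ range e, T jk.1 jk.2 := by
    calc S = ∑ u : ZMod N, ∑ j ∈ range d, ∑ k ∈ range e, (χ₀ ^ j) u * (ψ₀ ^ k) (1 + u) :=
          Finset.sum_congr rfl fun u _ => Finset.sum_mul_sum (range d) (range e) _ _
      _ = ∑ j ∈ range d, ∑ u : ZMod N, ∑ k ∈ range e, (χ₀ ^ j) u * (ψ₀ ^ k) (1 + u) :=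
          Finset.sum_comm
      _ = ∑ j ∈ range d, ∑ k ∈ range e, ∑ u : ZMod N, (χ₀ ^ j) u * (ψ₀ ^ k) (1 + u) :=
          Finset.sum_congr rfl fun j _ => Finset.sum_comm
      _ = ∑ jk ∈ range d ×ˢ range e, T jk.1 jk.2 := by rw [Finset.sum_product]
  have hmem : ((0, 0) : ℕ × ℕ) ∈ range d ×ˢ range e := by
    simp [Nat.pos_of_ne_zero hd0, Nat.pos_of_ne_zero he0]
  have hsplit : S = T 0 0 + ∑ jk ∈ (range d ×ˢ range e).erase (0, 0), T jk.1 jk.2 := by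
    rw [hSsum, ← Finset.add_sum_erase _ _ hmem]
  -- numeric bound
  have hs : Real.sqrt N * Real.sqrt N = (N : ℝ) := Real.mul_self_sqrt (by positivity)
  have hs0 : (0 : ℝ) ≤ Real.sqrt N := Real.sqrt_nonneg _
  have hN33R : (33 : ℝ) ≤ N := by exact_mod_cast hN33
  have hde : ((d : ℝ) * e) * Real.sqrt N < (N : ℝ) - 2 := by
    have hde2 : ((d : ℝ) * e) ≤ (p : ℝ) * r := by
      have h1 : (d : ℝ) ≤ p := by exact_mod_cast hdp
      have h2 : (e : ℝ) ≤ r := by exact_mod_cast her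
      have h3 : (0:ℝ) ≤ d := by positivity
      have h4 : (0:ℝ) ≤ e := by positivity
      nlinarith
    have hbigR : 32 * ((p:ℝ) * r) ^ 2 < (N : ℝ) := by
      have : (32 * p ^ 2 * r ^ 2 : ℝ) < N := by exact_mod_cast hbig
      nlinarith [this]
    have hpr1 : (1 : ℝ) ≤ (p:ℝ) * r := by
      have h1 : (1 : ℝ) ≤ p := by exact_mod_cast hp1
      have h2 : (1 : ℝ) ≤ r := by exact_mod_cast hr1
      nlinarith
    have h5 : 5 * ((p:ℝ) * r) < Real.sqrt N := by
      nlinarith [hs, hs0, hbigR, hpr1]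
    have hspos : (0 : ℝ) < Real.sqrt N := by nlinarith
    have h6 : 5 * ((p:ℝ) * r) * Real.sqrt N < Real.sqrt N * Real.sqrt N :=
      mul_lt_mul_of_pos_right h5 hspos
    have h7 : ((d : ℝ) * e) * Real.sqrt N ≤ ((p:ℝ) * r) * Real.sqrt N :=
      mul_le_mul_of_nonneg_right hde2 hs0
    linarith [h6, h7, hs, hN33R]
  have hSne : S ≠ 0 := by
    intro h0
    have hrest : ‖∑ jk ∈ (range d ×ˢ range e).erase (0, 0), T jk.1 jk.2‖
        ≤ ((d : ℝ) * e) * Real.sqrt N := by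
      refine le_trans (norm_sum_le _ _) ?_
      refine le_trans (Finset.sum_le_card_nsmul _ _ (Real.sqrt N) ?_) ?_
      · intro jk hjk
        rw [Finset.mem_erase, Finset.mem_product, Finset.mem_range, Finset.mem_range] at hjk
        exact hbound jk.1 jk.2 hjk.2.1 hjk.2.2 (by simpa [Prod.ext_iff] using hjk.1)
      · rw [nsmul_eq_mul]
        have hcard : ((range d ×ˢ range e).erase (0, 0)).card ≤ d * e := by
          refine le_trans (Finset.card_erase_le) ?_
          simp [Finset.card_product]
        calc (((range d ×ˢ range e).erase (0, 0)).card : ℝ) * Real.sqrt N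
            ≤ ((d * e : ℕ) : ℝ) * Real.sqrt N := by
              apply mul_le_mul_of_nonneg_right _ (Real.sqrt_nonneg _)
              exact_mod_cast hcard
          _ = ((d : ℝ) * e) * Real.sqrt N := by push_cast; ring
    rw [hsplit] at h0
    have hT00n : ‖T 0 0‖ = (N : ℝ) - 2 := by
      rw [hT00]
      rw [show ((N : ℂ) - 2) = (((N : ℝ) - 2 : ℝ) : ℂ) by push_cast; ring]
      rw [Complex.norm_real]
      exact abs_of_nonneg (by linarith)
    have h9 : ‖T 0 0‖ ≤ ((d : ℝ) * e) * Real.sqrt N := by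
      rw [show T 0 0 = -∑ jk ∈ (range d ×ˢ range e).erase (0, 0), T jk.1 jk.2 from by
        linear_combination h0, norm_neg]
      exact hrest
    rw [hT00n] at h9
    linarith
  -- extract a good u
  obtain ⟨u, -, hu⟩ := Finset.exists_ne_zero_of_sum_ne_zero hSne
  have hP : (∑ j ∈ range d, (χ₀ ^ j) u) ≠ 0 := left_ne_zero_of_mul hu
  have hQ : (∑ k ∈ range e, (ψ₀ ^ k) (1 + u)) ≠ 0 := right_ne_zero_of_mul hu
  have main : ∀ (χ : MulChar (ZMod N) ℂ) (n : ℕ) (v : ZMod N), n ≠ 0 → orderOf χ = n →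
      (∑ j ∈ range n, (χ ^ j) v) ≠ 0 → IsUnit v ∧ χ v = 1 := by
    intro χ n v hn hord hsum
    have hunit : IsUnit v := by
      by_contra hv
      exact hsum (Finset.sum_eq_zero fun j _ => (χ ^ j).map_nonunit hv)
    refine ⟨hunit, ?_⟩
    by_contra hA
    apply hsum
    have hχn : χ ^ n = 1 := by rw [← hord]; exact pow_orderOf_eq_one χ
    have hAn : (χ v) ^ n = 1 := by
      calc (χ v) ^ n = (χ ^ n) v := (MulChar.pow_apply' χ hn v).symm
        _ = (1 : MulChar (ZMod N) ℂ) v := by rw [hχn]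
        _ = 1 := MulChar.one_apply hunit
    have hsum2 : ∑ j ∈ range n, (χ ^ j) v = ∑ j ∈ range n, (χ v) ^ j := by
      refine Finset.sum_congr rfl fun j _ => ?_
      rcases Nat.eq_zero_or_pos j with rfl | hj0
      · rw [pow_zero, pow_zero, MulChar.one_apply hunit]
      · exact MulChar.pow_apply' χ hj0.ne' v
    rw [hsum2, geom_sum_eq hA n, hAn, sub_self, zero_div]
  obtain ⟨huu, hA⟩ := main χ₀ d u hd0 hχord hP
  obtain ⟨hvv, hB⟩ := main ψ₀ e (1 + u) he0 hψord hQ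
  obtain ⟨t, ht⟩ := extract hp χ₀ hχord huu.unit (by rw [IsUnit.unit_spec]; exact hA)
  obtain ⟨w, hw⟩ := extract hr ψ₀ hψord hvv.unit (by rw [IsUnit.unit_spec]; exact hB)
  refine ⟨t, w, ?_⟩
  have hh1 : (↑t : ZMod N) ^ p = u := by
    rw [← Units.val_pow_eq_pow_val, ht, IsUnit.unit_spec]
  have hh2 : (↑w : ZMod N) ^ r = 1 + u := by
    rw [← Units.val_pow_eq_pow_val, hw, IsUnit.unit_spec]
  rw [hh1, hh2, add_comm]

end Aux

theorem stmt_14 (p q r : ℕ) (hp : 1 < p) (hq : 1 < q) (hr : 1 < r)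
    (h1 : q ∣ r ∨ r ∣ q) (h2 : p ∣ r ∨ r ∣ p) (h3 : q ∣ p ∨ p ∣ q)
    (N : ℕ) (hN : N.Prime) (hbig : 32 * p ^ 2 * q ^ 2 * r ^ 2 < N) :
    ∃ x y z : ℕ, 0 < x ∧ 0 < y ∧ 0 < z ∧
      (x ^ p + y ^ q) % N = z ^ r % N ∧ ¬ N ∣ x * y * z := by
  haveI : Fact N.Prime := ⟨hN⟩
  have hbig' : 32 * p ^ 2 * r ^ 2 < N := by
    have hq2 : 1 ≤ q ^ 2 := Nat.one_le_pow _ _ (by omega)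
    calc 32 * p ^ 2 * r ^ 2 = 32 * p ^ 2 * 1 * r ^ 2 := by ring
      _ ≤ 32 * p ^ 2 * q ^ 2 * r ^ 2 := by gcongr
      _ < N := hbig
  obtain ⟨t, w, htw⟩ := keyexists p r (by omega) (by omega) hbig'
  refine ⟨(↑t : ZMod N).val, 1, (↑w : ZMod N).val, ?_, one_pos, ?_, ?_, ?_⟩
  · exact Nat.pos_of_ne_zero fun h => t.ne_zero ((ZMod.val_eq_zero _).mp h)
  · exact Nat.pos_of_ne_zero fun h => w.ne_zero ((ZMod.val_eq_zero _).mp h)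
  · refine (ZMod.natCast_eq_natCast_iff _ _ _).mp ?_
    push_cast
    rw [ZMod.natCast_rightInverse, ZMod.natCast_rightInverse, one_pow]
    exact htw
  · intro hdvd
    have h0 : (((↑t : ZMod N).val * 1 * (↑w : ZMod N).val : ℕ) : ZMod N) = 0 :=
      (ZMod.natCast_eq_zero_iff _ _).mpr hdvd
    push_cast at h0
    rw [ZMod.natCast_rightInverse, ZMod.natCast_rightInverse] at h0
    exact (mul_ne_zero (mul_ne_zero t.ne_zero one_ne_zero) w.ne_zero) h0
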